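/- Let μ be the probability measure on [1/2,1] ∪ {∞} with density 1/(2y²) on [1/2,1] and atom 1/2 at ∞, so μ((y,∞]) = 1/(2y) for y ∈ [1/2,1]. Let Y_1, Y_2, Y_3, Y_4 be i.i.d. with law μ and U uniform on [0,1], all independent. Define Z = min(Y_1,Y_2,Y_3,Y_4) if U < min(Y_1,Y_2,Y_3,Y_4), and Z = ∞ otherwise. Then Z has density 1/(4x⁴) on [1/2, 1]. -/

import Mathlib

open MeasureTheory ProbabilityTheory
open scoped ENNReal

/-- The frozen-percolation solution measure `μ` on `[1/2,1] ∪ {∞} ⊆ ℝ≥0∞`: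
density `1/(2y²)` on `[1/2,1]` and an atom of mass `1/2` at `∞`. -/
noncomputable def frozenNu : Measure ℝ≥0∞ :=
  Measure.map ENNReal.ofReal
      ((volume.restrict (Set.Icc (1/2 : ℝ) 1)).withDensity fun y =>
        ENNReal.ofReal (1 / (2 * y ^ 2)))
    + ((1/2 : ℝ≥0∞)) • Measure.dirac ∞

noncomputable def fdens : Measure ℝ :=
  (volume.restrict (Set.Icc (1/2 : ℝ) 1)).withDensity fun y =>
    ENNReal.ofReal (1 / (2 * y ^ 2))

lemma frozenNu_eq : frozenNu = Measure.map ENNReal.ofReal fdens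
    + ((1/2 : ℝ≥0∞)) • Measure.dirac ∞ := rfl

open intervalIntegral in
lemma integral_zpow4 (a b : ℝ) (ha : 0 < a) (hab : a ≤ b) :
    ∫ x in a..b, x ^ (-4 : ℤ) = (b ^ (-3:ℤ) - a ^ (-3:ℤ)) / (-3) := by
  have h0 : (0:ℝ) ∉ Set.uIcc a b := by
    rw [Set.uIcc_of_le hab]; intro h; linarith [h.1]
  rw [integral_zpow (by right; exact ⟨by norm_num, h0⟩)]
  norm_num

lemma integral_half (y : ℝ) (hy : 1/2 ≤ y) (hy1 : y ≤ 1) :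
    ∫ x in y..1, 1 / (2 * x ^ 2) = 1 / (2 * y) - 1/2 := by
  have h0 : (0:ℝ) ∉ Set.uIcc y 1 := by
    rw [Set.uIcc_of_le hy1]; intro h; linarith [h.1]
  have hc : ∀ x ∈ Set.uIcc y 1, 1 / (2 * x ^ 2) = (1/2) * x ^ (-2 : ℤ) := by
    intro x hx
    rw [Set.uIcc_of_le hy1] at hx
    have hx0 : x ≠ 0 := by intro h; subst h; linarith [hx.1]
    rw [zpow_neg, ← zpow_natCast (n := 2)]
    push_cast
    field_simp
  rw [intervalIntegral.integral_congr hc, intervalIntegral.integral_const_mul,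
    integral_zpow (by right; exact ⟨by norm_num, h0⟩)]
  have hy0 : y ≠ 0 := by positivity
  norm_num
  field_simp
  ring

lemma lint_Ioc (y : ℝ) (hy : 1/2 ≤ y) (hy1 : y ≤ 1) :
    ∫⁻ x in Set.Ioc y 1, ENNReal.ofReal (1 / (2 * x ^ 2)) =
      ENNReal.ofReal (1 / (2 * y) - 1/2) := by
  have hcont : ContinuousOn (fun x : ℝ => 1 / (2 * x ^ 2)) (Set.Icc y 1) := by
    apply ContinuousOn.div continuousOn_const (by fun_prop)
    intro x hx
    have : x ≠ 0 := by intro h; subst h; simp at hx; linarith [hx]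
    positivity
  have hint : IntegrableOn (fun x : ℝ => 1 / (2 * x ^ 2)) (Set.Ioc y 1) := by
    exact (hcont.integrableOn_Icc).mono_set Set.Ioc_subset_Icc_self
  rw [← ofReal_integral_eq_lintegral_ofReal hint
    (Filter.Eventually.of_forall fun x => by positivity)]
  rw [← intervalIntegral.integral_of_le hy1, integral_half y hy hy1]

lemma fdens_Ioi (y : ℝ) (hy : 1/2 ≤ y) (hy1 : y ≤ 1) :
    fdens (Set.Ioi y) = ENNReal.ofReal (1 / (2 * y) - 1/2) := by
  rw [fdens, withDensity_apply _ measurableSet_Ioi,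
    Measure.restrict_restrict measurableSet_Ioi]
  have : Set.Ioi y ∩ Set.Icc (1/2 : ℝ) 1 = Set.Ioc y 1 := by
    ext x
    simp only [Set.mem_inter_iff, Set.mem_Ioi, Set.mem_Icc, Set.mem_Ioc]
    constructor
    · rintro ⟨h1, _, h3⟩; exact ⟨h1, h3⟩
    · rintro ⟨h1, h2⟩; exact ⟨h1, le_trans hy h1.le, h2⟩
  rw [this, lint_Ioc y hy hy1]

lemma fdens_Ici (y : ℝ) (hy : 1/2 ≤ y) (hy1 : y ≤ 1) :
    fdens (Set.Ici y) = ENNReal.ofReal (1 / (2 * y) - 1/2) := by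
  rw [fdens, withDensity_apply _ measurableSet_Ici,
    Measure.restrict_restrict measurableSet_Ici]
  have h1 : Set.Ici y ∩ Set.Icc (1/2 : ℝ) 1 = Set.Icc y 1 := by
    ext x
    simp only [Set.mem_inter_iff, Set.mem_Ici, Set.mem_Icc]
    constructor
    · rintro ⟨h1, _, h3⟩; exact ⟨h1, h3⟩
    · rintro ⟨h1, h2⟩; exact ⟨h1, le_trans hy h1, h2⟩
  rw [h1, setLIntegral_congr (Ioc_ae_eq_Icc (a := y) (b := 1) (μ := volume)).symm,
    lint_Ioc y hy hy1]

lemma fdens_univ : fdens Set.univ = ENNReal.ofReal (1/2) := by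
  have : fdens Set.univ = fdens (Set.Ici (1/2 : ℝ)) := by
    rw [fdens, withDensity_apply _ MeasurableSet.univ,
      withDensity_apply _ measurableSet_Ici,
      Measure.restrict_restrict measurableSet_Ici, Measure.restrict_univ,
      Set.inter_eq_right.2 (fun x hx => hx.1)]
  rw [this, fdens_Ici (1/2) le_rfl (by norm_num)]
  norm_num

lemma preimage_Ioi (y : ℝ) (hy : 0 < y) :
    ENNReal.ofReal ⁻¹' Set.Ioi (ENNReal.ofReal y) = Set.Ioi y := by
  ext x
  simp only [Set.mem_preimage, Set.mem_Ioi]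
  exact ENNReal.ofReal_lt_ofReal_iff_of_nonneg hy.le

lemma preimage_Ici (y : ℝ) (hy : 0 < y) :
    ENNReal.ofReal ⁻¹' Set.Ici (ENNReal.ofReal y) = Set.Ici y := by
  ext x
  simp only [Set.mem_preimage, Set.mem_Ici]
  constructor
  · intro h
    rcases le_or_gt x 0 with hx | hx
    · exfalso
      have h0 : ENNReal.ofReal x = 0 := by simp [ENNReal.ofReal_eq_zero, hx]
      rw [h0, nonpos_iff_eq_zero, ENNReal.ofReal_eq_zero] at h
      linarith
    · exact (ENNReal.ofReal_le_ofReal_iff hx.le).1 h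
  · intro h
    exact ENNReal.ofReal_le_ofReal h

lemma frozenNu_Ioi (y : ℝ) (hy : 1/2 ≤ y) (hy1 : y ≤ 1) :
    frozenNu (Set.Ioi (ENNReal.ofReal y)) = ENNReal.ofReal (1 / (2 * y)) := by
  have hy0 : (0:ℝ) < y := by linarith
  rw [frozenNu_eq, Measure.add_apply, Measure.smul_apply,
    Measure.map_apply ENNReal.measurable_ofReal measurableSet_Ioi,
    preimage_Ioi y hy0, fdens_Ioi y hy hy1,
    Measure.dirac_apply' _ measurableSet_Ioi,
    Set.indicator_of_mem (by simp [Set.mem_Ioi, ENNReal.ofReal_lt_top])]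
  simp only [Pi.one_apply, smul_eq_mul, mul_one]
  rw [show ((1:ℝ≥0∞)/2) = ENNReal.ofReal (1/2) by
    rw [ENNReal.ofReal_div_of_pos] <;> norm_num]
  rw [← ENNReal.ofReal_add (by rw [sub_nonneg, div_le_div_iff₀] <;> nlinarith) (by norm_num)]
  norm_num

lemma frozenNu_Ici (y : ℝ) (hy : 1/2 ≤ y) (hy1 : y ≤ 1) :
    frozenNu (Set.Ici (ENNReal.ofReal y)) = ENNReal.ofReal (1 / (2 * y)) := by
  have hy0 : (0:ℝ) < y := by linarith
  rw [frozenNu_eq, Measure.add_apply, Measure.smul_apply,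
    Measure.map_apply ENNReal.measurable_ofReal measurableSet_Ici,
    preimage_Ici y hy0, fdens_Ici y hy hy1,
    Measure.dirac_apply' _ measurableSet_Ici,
    Set.indicator_of_mem (by simp [Set.mem_Ici, le_top])]
  simp only [Pi.one_apply, smul_eq_mul, mul_one]
  rw [show ((1:ℝ≥0∞)/2) = ENNReal.ofReal (1/2) by
    rw [ENNReal.ofReal_div_of_pos] <;> norm_num]
  rw [← ENNReal.ofReal_add (by rw [sub_nonneg, div_le_div_iff₀] <;> nlinarith) (by norm_num)]
  norm_num

instance : IsProbabilityMeasure frozenNu := by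
  constructor
  rw [frozenNu_eq, Measure.add_apply, Measure.smul_apply,
    Measure.map_apply ENNReal.measurable_ofReal MeasurableSet.univ,
    Set.preimage_univ, fdens_univ, Measure.dirac_apply' _ MeasurableSet.univ]
  simp only [Set.indicator_univ, Pi.one_apply, smul_eq_mul, mul_one]
  rw [show ((1:ℝ≥0∞)/2) = ENNReal.ofReal (1/2) by
    rw [ENNReal.ofReal_div_of_pos] <;> norm_num,
    ← ENNReal.ofReal_add (by norm_num) (by norm_num)]
  norm_num

noncomputable def piNu : Measure (Fin 4 → ℝ≥0∞) := Measure.pi fun _ : Fin 4 => frozenNu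

instance : IsProbabilityMeasure piNu := by
  rw [piNu]; infer_instance

lemma measurable_inf4 : Measurable (fun y : Fin 4 → ℝ≥0∞ => ⨅ i, y i) :=
  Measurable.iInf fun i => measurable_pi_apply i

lemma lt_iInf_iff4 (c : ℝ≥0∞) (y : Fin 4 → ℝ≥0∞) :
    c < ⨅ i, y i ↔ ∀ i, c < y i := by
  constructor
  · intro h i; exact h.trans_le (iInf_le _ i)
  · intro h
    obtain ⟨i, hi⟩ := exists_eq_ciInf_of_finite (f := y)
    rw [← hi]; exact h i

lemma piNu_ge (c : ℝ≥0∞) : piNu {y | c ≤ ⨅ i, y i} = (frozenNu (Set.Ici c)) ^ 4 := by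
  have hset : {y : Fin 4 → ℝ≥0∞ | c ≤ ⨅ i, y i}
      = Set.pi Set.univ (fun _ : Fin 4 => Set.Ici c) := by
    ext y
    simp [Set.mem_pi, le_iInf_iff, Pi.le_def]
  rw [piNu, hset, Measure.pi_pi]
  simp [Finset.prod_const]

lemma piNu_gt (c : ℝ≥0∞) : piNu {y | c < ⨅ i, y i} = (frozenNu (Set.Ioi c)) ^ 4 := by
  have hset : {y : Fin 4 → ℝ≥0∞ | c < ⨅ i, y i}
      = Set.pi Set.univ (fun _ : Fin 4 => Set.Ioi c) := by
    ext y
    simp [Set.mem_pi, lt_iInf_iff4]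
  rw [piNu, hset, Measure.pi_pi]
  simp [Finset.prod_const]

lemma pow4_val (u : ℝ) (hu : 1/2 ≤ u) :
    (ENNReal.ofReal (1 / (2 * u))) ^ 4 = ENNReal.ofReal (1 / (16 * u ^ 4)) := by
  have hu0 : u ≠ 0 := by intro h; subst h; norm_num at hu
  rw [← ENNReal.ofReal_pow (by positivity)]
  congr 1
  field_simp
  ring

lemma piNu_Ioc (u b : ℝ) (hu : 1/2 ≤ u) (hub : u ≤ b) (hb : b ≤ 1) :
    piNu {y | ENNReal.ofReal u < ⨅ i, y i ∧ ⨅ i, y i ≤ ENNReal.ofReal b} =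
      ENNReal.ofReal (1 / (16 * u ^ 4)) - ENNReal.ofReal (1 / (16 * b ^ 4)) := by
  have hd : {y : Fin 4 → ℝ≥0∞ | ENNReal.ofReal u < ⨅ i, y i ∧ ⨅ i, y i ≤ ENNReal.ofReal b}
      = {y | ENNReal.ofReal u < ⨅ i, y i} \ {y | ENNReal.ofReal b < ⨅ i, y i} := by
    ext y
    simp only [Set.mem_setOf_eq, Set.mem_diff, not_lt]
  have hsub : {y : Fin 4 → ℝ≥0∞ | ENNReal.ofReal b < ⨅ i, y i}
      ⊆ {y | ENNReal.ofReal u < ⨅ i, y i} := by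
    intro y hy
    exact lt_of_le_of_lt (ENNReal.ofReal_le_ofReal hub) hy
  have hmb : MeasurableSet {y : Fin 4 → ℝ≥0∞ | ENNReal.ofReal b < ⨅ i, y i} :=
    measurable_inf4 measurableSet_Ioi
  rw [hd, measure_diff hsub hmb.nullMeasurableSet (measure_ne_top _ _),
    piNu_gt, piNu_gt, frozenNu_Ioi u hu (le_trans hub hb),
    frozenNu_Ioi b (le_trans hu hub) hb, pow4_val u hu, pow4_val b (le_trans hu hub)]

lemma piNu_Icc (a b : ℝ) (ha : 1/2 ≤ a) (hab : a ≤ b) (hb : b ≤ 1) :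
    piNu {y | ENNReal.ofReal a ≤ ⨅ i, y i ∧ ⨅ i, y i ≤ ENNReal.ofReal b} =
      ENNReal.ofReal (1 / (16 * a ^ 4)) - ENNReal.ofReal (1 / (16 * b ^ 4)) := by
  have hd : {y : Fin 4 → ℝ≥0∞ | ENNReal.ofReal a ≤ ⨅ i, y i ∧ ⨅ i, y i ≤ ENNReal.ofReal b}
      = {y | ENNReal.ofReal a ≤ ⨅ i, y i} \ {y | ENNReal.ofReal b < ⨅ i, y i} := by
    ext y
    simp only [Set.mem_setOf_eq, Set.mem_diff, not_lt]
  have hsub : {y : Fin 4 → ℝ≥0∞ | ENNReal.ofReal b < ⨅ i, y i}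
      ⊆ {y | ENNReal.ofReal a ≤ ⨅ i, y i} := by
    intro y hy
    exact le_trans (ENNReal.ofReal_le_ofReal hab) hy.le
  have hmb : MeasurableSet {y : Fin 4 → ℝ≥0∞ | ENNReal.ofReal b < ⨅ i, y i} :=
    measurable_inf4 measurableSet_Ioi
  rw [hd, measure_diff hsub hmb.nullMeasurableSet (measure_ne_top _ _),
    piNu_gt, piNu_ge, frozenNu_Ici a ha (le_trans hab hb),
    frozenNu_Ioi b (le_trans ha hab) hb, pow4_val a ha, pow4_val b (le_trans ha hab)]

theorem frozen_percolation_edge_density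
    (a b : ℝ) (ha : 1/2 ≤ a) (hab : a ≤ b) (hb : b ≤ 1) :
    Measure.map
        (fun p : (Fin 4 → ℝ≥0∞) × ℝ =>
          if ENNReal.ofReal p.2 < ⨅ i, p.1 i then ⨅ i, p.1 i else ∞)
        ((Measure.pi fun _ : Fin 4 => frozenNu).prod
          (volume.restrict (Set.Icc (0:ℝ) 1)))
        (Set.Icc (ENNReal.ofReal a) (ENNReal.ofReal b)) =
      ENNReal.ofReal (∫ x in a..b, 1 / (4 * x ^ 4)) := by
  have ha0 : (0:ℝ) < a := by linarith
  have hb0 : (0:ℝ) < b := by linarith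
  set oa := ENNReal.ofReal a with hoa
  set ob := ENNReal.ofReal b with hob
  set T := fun p : (Fin 4 → ℝ≥0∞) × ℝ =>
    if ENNReal.ofReal p.2 < ⨅ i, p.1 i then ⨅ i, p.1 i else ∞ with hT
  have hmfst : Measurable (fun p : (Fin 4 → ℝ≥0∞) × ℝ => ⨅ i, p.1 i) :=
    measurable_inf4.comp measurable_fst
  have hcond : MeasurableSet {p : (Fin 4 → ℝ≥0∞) × ℝ | ENNReal.ofReal p.2 < ⨅ i, p.1 i} :=
    measurableSet_lt (ENNReal.measurable_ofReal.comp measurable_snd) hmfst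
  have hTmeas : Measurable T := Measurable.ite hcond hmfst measurable_const
  have hS : MeasurableSet (T ⁻¹' Set.Icc oa ob) := hTmeas measurableSet_Icc
  rw [show (Measure.pi fun _ : Fin 4 => frozenNu) = piNu from rfl,
    Measure.map_apply hTmeas measurableSet_Icc, Measure.prod_apply_symm hS]
  -- identify slices
  have h_slice : ∀ u : ℝ, (fun y : Fin 4 → ℝ≥0∞ => (y, u)) ⁻¹' (T ⁻¹' Set.Icc oa ob)
      = {y | ENNReal.ofReal u < ⨅ i, y i ∧ oa ≤ ⨅ i, y i ∧ ⨅ i, y i ≤ ob} := by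
    intro u
    ext y
    simp only [Set.mem_preimage, Set.mem_Icc, Set.mem_setOf_eq, hT]
    split_ifs with h
    · tauto
    · constructor
      · rintro ⟨-, h2⟩
        rw [hob] at h2
        exact absurd (top_le_iff.1 h2) (by simp)
      · rintro ⟨h1, -⟩
        exact absurd h1 h
  simp only [h_slice]
  -- split the interval
  have hsplit : Set.Icc (0:ℝ) 1 = Set.Ico 0 a ∪ (Set.Icc a b ∪ Set.Ioc b 1) := by
    ext x
    simp only [Set.mem_Icc, Set.mem_union, Set.mem_Ico, Set.mem_Ioc]
    constructor
    · rintro ⟨h0, h1⟩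
      rcases lt_or_ge x a with h | h
      · exact Or.inl ⟨h0, h⟩
      · rcases le_or_gt x b with h' | h'
        · exact Or.inr (Or.inl ⟨h, h'⟩)
        · exact Or.inr (Or.inr ⟨h', h1⟩)
    · rintro (⟨h0, h1⟩ | ⟨h0, h1⟩ | ⟨h0, h1⟩) <;> constructor <;> linarith
  have hdisj1 : Disjoint (Set.Ico (0:ℝ) a) (Set.Icc a b ∪ Set.Ioc b 1) := by
    rw [Set.disjoint_left]
    rintro x ⟨-, hx⟩ (⟨h1, -⟩ | ⟨h1, -⟩) <;> linarith
  have hdisj2 : Disjoint (Set.Icc a b) (Set.Ioc b 1) := by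
    rw [Set.disjoint_left]
    rintro x ⟨-, hx⟩ ⟨h1, -⟩; linarith
  rw [hsplit, Measure.restrict_union hdisj1 ((measurableSet_Icc).union measurableSet_Ioc),
    Measure.restrict_union hdisj2 measurableSet_Ioc, lintegral_add_measure,
    lintegral_add_measure]
  -- the three pieces
  have hI1 : ∫⁻ u in Set.Ico (0:ℝ) a,
      piNu {y | ENNReal.ofReal u < ⨅ i, y i ∧ oa ≤ ⨅ i, y i ∧ ⨅ i, y i ≤ ob}
      = (ENNReal.ofReal (1 / (16 * a ^ 4)) - ENNReal.ofReal (1 / (16 * b ^ 4)))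
          * ENNReal.ofReal a := by
    have hval : ∀ u ∈ Set.Ico (0:ℝ) a,
        piNu {y | ENNReal.ofReal u < ⨅ i, y i ∧ oa ≤ ⨅ i, y i ∧ ⨅ i, y i ≤ ob}
        = ENNReal.ofReal (1 / (16 * a ^ 4)) - ENNReal.ofReal (1 / (16 * b ^ 4)) := by
      intro u hu
      have hset : {y : Fin 4 → ℝ≥0∞ | ENNReal.ofReal u < ⨅ i, y i ∧ oa ≤ ⨅ i, y i ∧ ⨅ i, y i ≤ ob}
          = {y | oa ≤ ⨅ i, y i ∧ ⨅ i, y i ≤ ob} := by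
        ext y
        simp only [Set.mem_setOf_eq]
        constructor
        · rintro ⟨-, h2, h3⟩; exact ⟨h2, h3⟩
        · rintro ⟨h2, h3⟩
          refine ⟨lt_of_lt_of_le ?_ h2, h2, h3⟩
          exact (ENNReal.ofReal_lt_ofReal_iff_of_nonneg hu.1).2 hu.2
      rw [hset, piNu_Icc a b ha hab hb]
    rw [setLIntegral_congr_fun measurableSet_Ico hval,
      setLIntegral_const, Real.volume_Ico, sub_zero]
  have hI3 : ∫⁻ u in Set.Ioc b 1,
      piNu {y | ENNReal.ofReal u < ⨅ i, y i ∧ oa ≤ ⨅ i, y i ∧ ⨅ i, y i ≤ ob} = 0 := by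
    have hval : ∀ u ∈ Set.Ioc b 1,
        piNu {y | ENNReal.ofReal u < ⨅ i, y i ∧ oa ≤ ⨅ i, y i ∧ ⨅ i, y i ≤ ob} = 0 := by
      intro u hu
      have hset : {y : Fin 4 → ℝ≥0∞ | ENNReal.ofReal u < ⨅ i, y i ∧ oa ≤ ⨅ i, y i ∧ ⨅ i, y i ≤ ob}
          = (∅ : Set (Fin 4 → ℝ≥0∞)) := by
        ext y
        simp only [Set.mem_setOf_eq, Set.mem_empty_iff_false, iff_false, not_and]
        intro h1 _
        intro h3
        exact absurd (lt_of_le_of_lt h3 (lt_of_le_of_lt (ENNReal.ofReal_le_ofReal hu.1.le) h1))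
          (lt_irrefl _)
      rw [hset, measure_empty]
    rw [setLIntegral_congr_fun measurableSet_Ioc hval]
    simp
  have hI2 : ∫⁻ u in Set.Icc a b,
      piNu {y | ENNReal.ofReal u < ⨅ i, y i ∧ oa ≤ ⨅ i, y i ∧ ⨅ i, y i ≤ ob}
      = ENNReal.ofReal (∫ u in a..b, (1 / (16 * u ^ 4) - 1 / (16 * b ^ 4))) := by
    have hstep : ∀ u ∈ Set.Icc a b,
        piNu {y | ENNReal.ofReal u < ⨅ i, y i ∧ oa ≤ ⨅ i, y i ∧ ⨅ i, y i ≤ ob}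
        = ENNReal.ofReal (1 / (16 * u ^ 4) - 1 / (16 * b ^ 4)) := by
      intro u hu
      have hu2 : 1/2 ≤ u := le_trans ha hu.1
      have hset : {y : Fin 4 → ℝ≥0∞ | ENNReal.ofReal u < ⨅ i, y i ∧ oa ≤ ⨅ i, y i ∧ ⨅ i, y i ≤ ob}
          = {y | ENNReal.ofReal u < ⨅ i, y i ∧ ⨅ i, y i ≤ ob} := by
        ext y
        simp only [Set.mem_setOf_eq]
        constructor
        · rintro ⟨h1, -, h3⟩; exact ⟨h1, h3⟩
        · rintro ⟨h1, h3⟩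
          exact ⟨h1, le_trans (ENNReal.ofReal_le_ofReal hu.1) h1.le, h3⟩
      rw [hset, piNu_Ioc u b hu2 hu.2 hb, ENNReal.ofReal_sub _ (by positivity)]
    rw [setLIntegral_congr_fun measurableSet_Icc hstep]
    have hcont : ContinuousOn (fun u : ℝ => 1 / (16 * u ^ 4) - 1 / (16 * b ^ 4))
        (Set.Icc a b) := by
      apply ContinuousOn.sub _ continuousOn_const
      apply ContinuousOn.div continuousOn_const (by fun_prop)
      intro x hx
      have : x ≠ 0 := by intro h; subst h; exact absurd hx.1 (by linarith)
      positivity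
    have hnn : 0 ≤ᵐ[volume.restrict (Set.Icc a b)]
        fun u : ℝ => 1 / (16 * u ^ 4) - 1 / (16 * b ^ 4) := by
      rw [Filter.EventuallyLE, ae_restrict_iff' measurableSet_Icc]
      apply Filter.Eventually.of_forall
      intro u hu
      have hu0 : 0 < u := lt_of_lt_of_le ha0 hu.1
      simp only [Pi.zero_apply, sub_nonneg]
      apply div_le_div_of_nonneg_left (by norm_num) (by positivity)
      nlinarith [pow_le_pow_left₀ hu0.le hu.2 4]
    rw [← ofReal_integral_eq_lintegral_ofReal hcont.integrableOn_Icc hnn,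
      integral_Icc_eq_integral_Ioc, ← intervalIntegral.integral_of_le hab]
  rw [hI1, hI2, hI3, add_zero]
  -- final arithmetic
  have hba4 : 1 / (16 * b ^ 4) ≤ 1 / (16 * a ^ 4) := by
    apply div_le_div_of_nonneg_left (by norm_num) (by positivity)
    nlinarith [pow_le_pow_left₀ ha0.le hab 4]
  rw [← ENNReal.ofReal_sub _ (by positivity),
    ← ENNReal.ofReal_mul (by linarith), ← ENNReal.ofReal_add (by nlinarith) ?hnn]
  case hnn =>
    apply intervalIntegral.integral_nonneg hab
    intro u hu
    have hu0 : 0 < u := lt_of_lt_of_le ha0 hu.1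
    rw [sub_nonneg]
    apply div_le_div_of_nonneg_left (by norm_num) (by positivity)
    nlinarith [pow_le_pow_left₀ hu0.le hu.2 4]
  congr 1
  -- real computation
  have e1 : ∫ x in a..b, 1 / (4 * x ^ 4) = (1/4) * ((b ^ (-3:ℤ) - a ^ (-3:ℤ)) / (-3)) := by
    have hc : ∀ x ∈ Set.uIcc a b, 1 / (4 * x ^ 4) = (1/4) * x ^ (-4 : ℤ) := by
      intro x hx
      rw [Set.uIcc_of_le hab] at hx
      have hx0 : x ≠ 0 := by intro h; subst h; linarith [hx.1]
      rw [zpow_neg, ← zpow_natCast (n := 4)]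
      push_cast
      field_simp
    rw [intervalIntegral.integral_congr hc, intervalIntegral.integral_const_mul,
      integral_zpow4 a b ha0 hab]
  have e2 : ∫ u in a..b, (1 / (16 * u ^ 4) - 1 / (16 * b ^ 4))
      = (1/16) * ((b ^ (-3:ℤ) - a ^ (-3:ℤ)) / (-3)) - (b - a) * (1 / (16 * b ^ 4)) := by
    have hint1 : IntervalIntegrable (fun u : ℝ => 1 / (16 * u ^ 4)) volume a b := by
      apply ContinuousOn.intervalIntegrable
      apply ContinuousOn.div continuousOn_const (by fun_prop)
      intro x hx
      rw [Set.uIcc_of_le hab] at hx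
      have : x ≠ 0 := by intro h; subst h; linarith [hx.1]
      positivity
    rw [intervalIntegral.integral_sub hint1 (intervalIntegrable_const),
      intervalIntegral.integral_const, smul_eq_mul]
    congr 1
    have hc : ∀ x ∈ Set.uIcc a b, 1 / (16 * x ^ 4) = (1/16) * x ^ (-4 : ℤ) := by
      intro x hx
      rw [Set.uIcc_of_le hab] at hx
      have hx0 : x ≠ 0 := by intro h; subst h; linarith [hx.1]
      rw [zpow_neg, ← zpow_natCast (n := 4)]
      push_cast
      field_simp
    rw [intervalIntegral.integral_congr hc, intervalIntegral.integral_const_mul,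
      integral_zpow4 a b ha0 hab]
  rw [e1, e2]
  have hA : a ≠ 0 := ne_of_gt ha0
  have hB : b ≠ 0 := ne_of_gt hb0
  have h3 : ∀ x : ℝ, x ≠ 0 → x ^ (-3:ℤ) = (x ^ 3)⁻¹ := by
    intro x hx
    rw [zpow_neg, ← zpow_natCast (n := 3)]
    norm_num
  rw [h3 a hA, h3 b hB]
  field_simp
  ring
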